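/- In the ring of MacMahon symmetric functions, for a bipartite partition Λ with multiplicities c_{(i,j)} (the number of parts of Λ equal to (i,j)) and any (a,b) ∈ ℕ×ℕ \ {(0,0)}, the product satisfies: m_{(a,b)} · m_Λ = (c_{(a,b)}+1) · m_{(a,b)Λ} + Σ_{(i,j): c_{(i,j)}>0} (c_{(a+i,b+j)}+1) · m_{(a+i,b+j)(Λ∖(i,j))}. -/

import Mathlib

/-- The monomial MacMahon symmetric function `m_Λ` attached to a bipartite partition
`Λ` (a multiset of vectors in `ℕ×ℕ`), as a formal power series in two families of
variables `xᵢ = X (i,0)`, `yᵢ = X (i,1)`: the sum, with coefficients `0` or `1`, of all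
monomials whose multiset of exponent pairs equals `Λ`. -/
noncomputable def mm (Λ : Multiset (ℕ × ℕ)) : MvPowerSeries (ℕ × Fin 2) ℂ :=
  fun d => if (d.support.image Prod.fst).val.map
      (fun i => (d (i, 0), d (i, 1))) = Λ then 1 else 0


namespace MMaux

abbrev D := (ℕ × Fin 2) →₀ ℕ

def S (d : D) : Finset ℕ := d.support.image Prod.fst
def fd (d : D) (i : ℕ) : ℕ × ℕ := (d (i,0), d (i,1))
def Φ (d : D) : Multiset (ℕ × ℕ) := (S d).val.map (fd d)

lemma coeff_mm (Λ : Multiset (ℕ × ℕ)) (d : D) :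
    MvPowerSeries.coeff d (mm Λ) = if Φ d = Λ then 1 else 0 := rfl

lemma mem_S {d : D} {i : ℕ} : i ∈ S d ↔ (d (i,0) ≠ 0 ∨ d (i,1) ≠ 0) := by
  simp only [S, Finset.mem_image, Finsupp.mem_support_iff]
  constructor
  · rintro ⟨⟨j, ε⟩, hne, rfl⟩
    fin_cases ε
    · exact Or.inl hne
    · exact Or.inr hne
  · rintro (h | h)
    · exact ⟨(i, 0), h, rfl⟩
    · exact ⟨(i, 1), h, rfl⟩

lemma apply_eq_zero_of_not_mem_S {d : D} {i : ℕ} (h : i ∉ S d) (ε : Fin 2) :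
    d (i, ε) = 0 := by
  rw [mem_S] at h
  push_neg at h
  fin_cases ε
  · exact h.1
  · exact h.2

noncomputable def σf (a b i : ℕ) : D := Finsupp.single (i,0) a + Finsupp.single (i,1) b

lemma σf_apply0 (a b i : ℕ) : σf a b i (i, 0) = a := by
  simp [σf, Finsupp.single_apply]

lemma σf_apply1 (a b i : ℕ) : σf a b i (i, 1) = b := by
  simp [σf, Finsupp.single_apply]

lemma σf_apply_ne (a b : ℕ) {i j : ℕ} (h : j ≠ i) (ε : Fin 2) : σf a b i (j, ε) = 0 := by
  simp [σf, Finsupp.single_apply, Prod.ext_iff, h.symm]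

lemma σf_le {a b : ℕ} {d : D} {i : ℕ} (h0 : a ≤ d (i,0)) (h1 : b ≤ d (i,1)) :
    σf a b i ≤ d := by
  rw [Finsupp.le_def]
  rintro ⟨j, ε⟩
  by_cases hj : j = i
  · subst hj
    fin_cases ε
    · show σf a b j (j, 0) ≤ d (j, 0); rw [σf_apply0]; exact h0
    · show σf a b j (j, 1) ≤ d (j, 1); rw [σf_apply1]; exact h1
  · rw [σf_apply_ne _ _ hj]; exact Nat.zero_le _

def Ψ (d : D) (i : ℕ) : Multiset (ℕ × ℕ) := ((S d).erase i).val.map (fd d)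

lemma Φ_decomp (d : D) (i : ℕ) :
    Φ d = (if i ∈ S d then {fd d i} else 0) + Ψ d i := by
  by_cases h : i ∈ S d
  · rw [if_pos h, Φ, Ψ, Finset.erase_val, Multiset.singleton_add,
      ← Multiset.map_cons, Multiset.cons_erase (Finset.mem_def.mp h)]
  · rw [if_neg h, zero_add, Ψ, Finset.erase_eq_of_notMem h, Φ]

lemma Ψ_congr {d d' : D} (i : ℕ) (h : ∀ j, j ≠ i → ∀ ε : Fin 2, d' (j, ε) = d (j, ε)) :
    Ψ d' i = Ψ d i := by
  have hS : (S d').erase i = (S d).erase i := by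
    ext j
    simp only [Finset.mem_erase, mem_S]
    constructor
    · rintro ⟨hj, hv⟩
      refine ⟨hj, ?_⟩
      rw [h j hj 0, h j hj 1] at hv
      exact hv
    · rintro ⟨hj, hv⟩
      refine ⟨hj, ?_⟩
      rw [h j hj 0, h j hj 1]
      exact hv
  rw [Ψ, Ψ, hS]
  apply Multiset.map_congr rfl
  intro j hj
  have hji : j ≠ i := (Finset.mem_erase.mp (Finset.mem_def.mpr hj)).1
  unfold fd
  rw [h j hji 0, h j hji 1]

lemma count_Φ (d : D) (q : ℕ × ℕ) :
    (Φ d).count q = ((S d).filter (fun i => fd d i = q)).card := by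
  rw [Φ, Multiset.count_map]
  rw [Finset.card, Finset.filter_val]
  congr 1
  apply Multiset.filter_congr
  intro i _
  exact eq_comm

lemma Φ_σf (a b : ℕ) (hab : (a, b) ≠ ((0:ℕ), (0:ℕ))) (i : ℕ) :
    Φ (σf a b i) = {(a, b)} := by
  have hS : S (σf a b i) = {i} := by
    ext j
    simp only [mem_S, Finset.mem_singleton]
    constructor
    · intro hv
      by_contra hj
      rw [σf_apply_ne a b hj 0, σf_apply_ne a b hj 1] at hv
      simp at hv
    · rintro rfl
      rw [σf_apply0, σf_apply1]
      by_contra hv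
      push_neg at hv
      exact hab (Prod.ext hv.1 hv.2)
  rw [Φ, hS]
  show Multiset.map (fd (σf a b i)) {i} = {(a, b)}
  rw [Multiset.map_singleton]
  unfold fd
  rw [σf_apply0, σf_apply1]

lemma eq_σf_of_Φ_single {a b : ℕ} {e : D} (h : Φ e = {(a, b)}) :
    ∃ i, e = σf a b i := by
  have hcard : (S e).val.card = 1 := by
    have := congrArg Multiset.card h
    rwa [Φ, Multiset.card_map, Multiset.card_singleton] at this
  obtain ⟨i, hi⟩ := Multiset.card_eq_one.mp hcard
  have hfd : fd e i = (a, b) := by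
    have : Φ e = {fd e i} := by rw [Φ, hi, Multiset.map_singleton]
    rw [this] at h
    exact Multiset.singleton_inj.mp h
  refine ⟨i, Finsupp.ext ?_⟩
  rintro ⟨j, ε⟩
  by_cases hj : j = i
  · subst hj
    fin_cases ε
    · show e (j, 0) = σf a b j (j, 0)
      rw [σf_apply0]; exact congrArg Prod.fst hfd
    · show e (j, 1) = σf a b j (j, 1)
      rw [σf_apply1]; exact congrArg Prod.snd hfd
  · rw [σf_apply_ne a b hj]
    apply apply_eq_zero_of_not_mem_S
    intro hmem
    apply hj
    have hmv : j ∈ (S e).val := Finset.mem_def.mp hmem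
    rw [hi] at hmv
    exact Multiset.mem_singleton.mp hmv

lemma Φ_cons {d : D} {i : ℕ} (hi : i ∈ S d) : Φ d = fd d i ::ₘ Ψ d i := by
  rw [Φ_decomp d i, if_pos hi, Multiset.singleton_add]

lemma Φ_sub (a b : ℕ) (d : D) {i : ℕ} (hi : i ∈ S d)
    (h0 : a ≤ d (i,0)) (h1 : b ≤ d (i,1)) :
    Φ (d - σf a b i) =
      (if (d (i,0) - a, d (i,1) - b) = ((0:ℕ),(0:ℕ)) then 0
        else {(d (i,0) - a, d (i,1) - b)}) + Ψ d i := by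
  set d' := d - σf a b i with hd'
  have happ : ∀ j, j ≠ i → ∀ ε : Fin 2, d' (j, ε) = d (j, ε) := by
    intro j hj ε
    rw [hd', Finsupp.tsub_apply, σf_apply_ne a b hj, Nat.sub_zero]
  have h'0 : d' (i,0) = d (i,0) - a := by rw [hd', Finsupp.tsub_apply, σf_apply0]
  have h'1 : d' (i,1) = d (i,1) - b := by rw [hd', Finsupp.tsub_apply, σf_apply1]
  rw [Φ_decomp d' i, Ψ_congr i happ]
  congr 1
  by_cases hq : (d (i,0) - a, d (i,1) - b) = ((0:ℕ),(0:ℕ))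
  · rw [if_pos hq, if_neg]
    rw [mem_S]
    push_neg
    simp only [Prod.mk.injEq] at hq
    rw [h'0, h'1]
    exact ⟨hq.1, hq.2⟩
  · have hiS' : i ∈ S d' := by
      rw [mem_S, h'0, h'1]
      by_contra hc
      push_neg at hc
      exact hq (by rw [hc.1, hc.2])
    rw [if_neg hq, if_pos hiS']
    congr 1
    show (d' (i,0), d' (i,1)) = _
    rw [h'0, h'1]

end MMaux

open MMaux

/-- Multiplication rule: `m_{(a,b)} · m_Λ = (c_{(a,b)}+1) m_{(a,b)Λ}
+ Σ_{(i,j): c_{(i,j)}>0} (c_{(a+i,b+j)}+1) m_{(a+i,b+j)(Λ∖(i,j))}`, where `c_{(i,j)}`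
is the multiplicity of `(i,j)` in `Λ`. -/
theorem stmt5 (a b : ℕ) (hab : (a, b) ≠ ((0 : ℕ), (0 : ℕ)))
    (Λ : Multiset (ℕ × ℕ)) (hΛ : (0, 0) ∉ Λ) :
    mm {(a, b)} * mm Λ =
      ((Λ.count (a, b) : ℂ) + 1) • mm ((a, b) ::ₘ Λ) +
      ∑ p ∈ Λ.toFinset, ((Λ.count (a + p.1, b + p.2) : ℂ) + 1) •
        mm ((a + p.1, b + p.2) ::ₘ Λ.erase p) := by
  classical
  have hab' : a ≠ 0 ∨ b ≠ 0 := by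
    by_contra h
    push_neg at h
    exact hab (by rw [h.1, h.2])
  ext d
  rw [MvPowerSeries.coeff_mul, map_add, map_smul, map_sum]
  simp only [map_smul, smul_eq_mul, coeff_mm]
  set T0 : Finset ℕ := (S d).filter (fun i => a ≤ d (i,0) ∧ b ≤ d (i,1)) with hT0
  have step1 : ∑ p ∈ Finset.HasAntidiagonal.antidiagonal d,
      (if Φ p.1 = {(a,b)} then (1:ℂ) else 0) * (if Φ p.2 = Λ then 1 else 0)
      = ∑ i ∈ T0, (if Φ (d - σf a b i) = Λ then (1:ℂ) else 0) := by
    have himg : T0.image (fun i => (σf a b i, d - σf a b i)) ⊆ Finset.HasAntidiagonal.antidiagonal d := by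
      intro p hp
      obtain ⟨i, hi, rfl⟩ := Finset.mem_image.mp hp
      rw [Finset.HasAntidiagonal.mem_antidiagonal]
      obtain ⟨-, h0, h1⟩ := Finset.mem_filter.mp hi
      exact add_tsub_cancel_of_le (σf_le h0 h1)
    have hzero : ∀ p ∈ Finset.HasAntidiagonal.antidiagonal d,
        p ∉ T0.image (fun i => (σf a b i, d - σf a b i)) →
        (if Φ p.1 = {(a,b)} then (1:ℂ) else 0) * (if Φ p.2 = Λ then 1 else 0) = 0 := by
      intro p hp hnp
      by_cases h1 : Φ p.1 = {(a, b)}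
      · by_cases h2 : Φ p.2 = Λ
        · exfalso
          apply hnp
          obtain ⟨i, hσ⟩ := eq_σf_of_Φ_single h1
          have hadd : p.1 + p.2 = d := Finset.HasAntidiagonal.mem_antidiagonal.mp hp
          have hle : σf a b i ≤ d := by
            rw [← hadd, hσ]
            exact le_self_add
          have ha0 : a ≤ d (i, 0) := by
            have := Finsupp.le_def.mp hle (i, 0)
            rwa [σf_apply0] at this
          have hb0 : b ≤ d (i, 1) := by
            have := Finsupp.le_def.mp hle (i, 1)
            rwa [σf_apply1] at this
          have hiS : i ∈ S d := by
            rw [mem_S]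
            rcases hab' with h | h
            · left; omega
            · right; omega
          have hp2 : p.2 = d - σf a b i := by
            rw [← hσ, ← hadd, add_tsub_cancel_left]
          exact Finset.mem_image.mpr ⟨i, Finset.mem_filter.mpr ⟨hiS, ha0, hb0⟩,
            Prod.ext_iff.mpr ⟨hσ.symm, hp2.symm⟩⟩
        · rw [if_neg h2, mul_zero]
      · rw [if_neg h1, zero_mul]
    have hinj : ∀ i ∈ T0, ∀ j ∈ T0,
        (σf a b i, d - σf a b i) = (σf a b j, d - σf a b j) → i = j := by
      intro i _ j _ hij
      by_contra hne
      have hσ : σf a b i = σf a b j := congrArg Prod.fst hij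
      have ha : a = 0 := by
        have := DFunLike.congr_fun hσ (i, 0)
        rwa [σf_apply0, σf_apply_ne a b hne] at this
      have hb : b = 0 := by
        have := DFunLike.congr_fun hσ (i, 1)
        rwa [σf_apply1, σf_apply_ne a b hne] at this
      exact hab (by rw [ha, hb])
    rw [← Finset.sum_subset himg hzero, Finset.sum_image hinj]
    apply Finset.sum_congr rfl
    intro i _
    rw [if_pos (Φ_σf a b hab i), one_mul]
  rw [step1, ← Finset.sum_filter_add_sum_filter_not T0 (fun i => fd d i = (a,b))]
  have partA : ∑ i ∈ T0.filter (fun i => fd d i = (a,b)),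
      (if Φ (d - σf a b i) = Λ then (1:ℂ) else 0)
      = ((Λ.count (a,b) : ℂ) + 1) * (if Φ d = (a,b) ::ₘ Λ then 1 else 0) := by
    have key_eqA : ∀ i ∈ T0.filter (fun i => fd d i = (a,b)),
        ((Φ (d - σf a b i) = Λ) ↔ (Φ d = (a,b) ::ₘ Λ)) := by
      intro i hi
      obtain ⟨hiT0, hfd⟩ := Finset.mem_filter.mp hi
      obtain ⟨hiS, h0, h1⟩ := Finset.mem_filter.mp hiT0
      have e0 : d (i,0) = a := congrArg Prod.fst hfd
      have e1 : d (i,1) = b := congrArg Prod.snd hfd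
      have hsub : Φ (d - σf a b i) = Ψ d i := by
        rw [Φ_sub a b d hiS h0 h1, if_pos, zero_add]
        rw [e0, e1]
        simp
      have hcons : Φ d = (a,b) ::ₘ Ψ d i := by rw [Φ_cons hiS, hfd]
      rw [hsub, hcons]
      exact (Multiset.cons_inj_right _).symm
    rw [Finset.sum_congr rfl (fun i hi => if_congr (key_eqA i hi) rfl rfl),
      Finset.sum_const]
    have hTA : T0.filter (fun i => fd d i = (a,b))
        = (S d).filter (fun i => fd d i = (a,b)) := by
      rw [hT0, Finset.filter_filter]
      apply Finset.filter_congr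
      intro i _
      constructor
      · exact fun h => h.2
      · intro h3
        simp only [fd, Prod.mk.injEq] at h3
        exact ⟨⟨le_of_eq h3.1.symm, le_of_eq h3.2.symm⟩,
          by show (d (i,0), d (i,1)) = _; exact Prod.ext h3.1 h3.2⟩
    by_cases hΦd : Φ d = (a,b) ::ₘ Λ
    · rw [if_pos hΦd, hTA, ← count_Φ, hΦd, Multiset.count_cons_self]
      push_cast
      rw [nsmul_eq_mul]
      push_cast
      ring
    · rw [if_neg hΦd, smul_zero, mul_zero]
  have partB : ∑ i ∈ T0.filter (fun i => ¬ fd d i = (a,b)),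
      (if Φ (d - σf a b i) = Λ then (1:ℂ) else 0)
      = ∑ p ∈ Λ.toFinset, ((Λ.count (a + p.1, b + p.2) : ℂ) + 1) *
        (if Φ d = (a + p.1, b + p.2) ::ₘ Λ.erase p then 1 else 0) := by
    set B := T0.filter (fun i => ¬ fd d i = (a,b)) with hBdef
    set q' : ℕ → ℕ × ℕ := fun i => (d (i,0) - a, d (i,1) - b) with hq'
    have key_eqB : ∀ i ∈ B, ((Φ (d - σf a b i) = Λ) ↔
        (q' i ∈ Λ ∧ Φ d = (a + (q' i).1, b + (q' i).2) ::ₘ Λ.erase (q' i))) := by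
      intro i hi
      obtain ⟨hiT0, hfd⟩ := Finset.mem_filter.mp hi
      obtain ⟨hiS, h0, h1⟩ := Finset.mem_filter.mp hiT0
      have hq0 : q' i ≠ ((0:ℕ), (0:ℕ)) := by
        intro hc
        apply hfd
        simp only [hq', Prod.mk.injEq] at hc
        have : d (i,0) = a ∧ d (i,1) = b := by omega
        exact Prod.ext this.1 this.2
      have hsub : Φ (d - σf a b i) = q' i ::ₘ Ψ d i := by
        rw [Φ_sub a b d hiS h0 h1, if_neg hq0, Multiset.singleton_add]
      have hfde : fd d i = (a + (q' i).1, b + (q' i).2) := by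
        show (d (i,0), d (i,1)) = _
        simp only [hq']
        exact Prod.ext (by omega) (by omega)
      have hcons : Φ d = (a + (q' i).1, b + (q' i).2) ::ₘ Ψ d i := by
        rw [Φ_cons hiS, hfde]
      rw [hsub, hcons]
      constructor
      · intro h
        have hmem : q' i ∈ Λ := h ▸ Multiset.mem_cons_self _ _
        refine ⟨hmem, ?_⟩
        have hΨ : Ψ d i = Λ.erase (q' i) := by
          rw [← h, Multiset.erase_cons_head]
        rw [hΨ]
      · rintro ⟨hmem, h⟩
        have hΨ : Ψ d i = Λ.erase (q' i) := (Multiset.cons_inj_right _).mp h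
        rw [hΨ, Multiset.cons_erase hmem]
    have hrestrict : ∑ i ∈ B, (if Φ (d - σf a b i) = Λ then (1:ℂ) else 0)
        = ∑ i ∈ B.filter (fun i => q' i ∈ Λ),
          (if Φ (d - σf a b i) = Λ then (1:ℂ) else 0) := by
      rw [eq_comm]
      apply Finset.sum_subset (Finset.filter_subset _ _)
      intro i hiB hni
      rw [if_neg]
      intro hcon
      exact hni (Finset.mem_filter.mpr ⟨hiB, ((key_eqB i hiB).mp hcon).1⟩)
    have hmaps : ∀ i ∈ B.filter (fun i => q' i ∈ Λ), q' i ∈ Λ.toFinset := by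
      intro i hi
      exact Multiset.mem_toFinset.mpr (Finset.mem_filter.mp hi).2
    rw [hrestrict, ← Finset.sum_fiberwise_of_maps_to hmaps
      (fun i => if Φ (d - σf a b i) = Λ then (1:ℂ) else 0)]
    apply Finset.sum_congr rfl
    intro p hp
    have hpΛ : p ∈ Λ := Multiset.mem_toFinset.mp hp
    have hp0 : p ≠ ((0:ℕ), (0:ℕ)) := fun hc => hΛ (hc ▸ hpΛ)
    have key2 : ∀ i ∈ (B.filter (fun i => q' i ∈ Λ)).filter (fun i => q' i = p),
        ((Φ (d - σf a b i) = Λ) ↔ (Φ d = (a + p.1, b + p.2) ::ₘ Λ.erase p)) := by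
      intro i hi
      obtain ⟨hi', hqp⟩ := Finset.mem_filter.mp hi
      obtain ⟨hiB, hqΛ⟩ := Finset.mem_filter.mp hi'
      rw [key_eqB i hiB, hqp]
      simp [hpΛ]
    rw [Finset.sum_congr rfl (fun i hi => if_congr (key2 i hi) rfl rfl),
      Finset.sum_const]
    by_cases hΦd : Φ d = (a + p.1, b + p.2) ::ₘ Λ.erase p
    · rw [if_pos hΦd]
      have hfil : (B.filter (fun i => q' i ∈ Λ)).filter (fun i => q' i = p)
          = (S d).filter (fun i => fd d i = (a + p.1, b + p.2)) := by
        ext i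
        simp only [hBdef, hT0, Finset.mem_filter, Finset.filter_filter, and_assoc]
        constructor
        · rintro ⟨h1, h2, h3, h4, h5, h6⟩
          refine ⟨h1, ?_⟩
          show (d (i,0), d (i,1)) = _
          have h6a : d (i,0) - a = p.1 := congrArg Prod.fst h6
          have h6b : d (i,1) - b = p.2 := congrArg Prod.snd h6
          exact Prod.ext (by omega) (by omega)
        · rintro ⟨h1, h6⟩
          simp only [fd, Prod.mk.injEq] at h6
          have hqp : q' i = p := by
            show ((d (i,0) - a : ℕ), (d (i,1) - b : ℕ)) = p
            exact Prod.ext (by omega) (by omega)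
          refine ⟨h1, by omega, by omega, ?_, by rw [hqp]; exact hpΛ, hqp⟩
          intro hc
          simp only [fd, Prod.mk.injEq] at hc
          apply hp0
          exact Prod.ext (by omega) (by omega)
      have hcnt : ((B.filter (fun i => q' i ∈ Λ)).filter (fun i => q' i = p)).card
          = Λ.count (a + p.1, b + p.2) + 1 := by
        rw [hfil, ← count_Φ, hΦd, Multiset.count_cons_self,
          Multiset.count_erase_of_ne]
        intro hc
        apply hab
        have f0 : a + p.1 = p.1 := congrArg Prod.fst hc
        have f1 : b + p.2 = p.2 := congrArg Prod.snd hc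
        exact Prod.ext (by omega) (by omega)
      rw [hcnt, nsmul_eq_mul]
      push_cast
      ring
    · rw [if_neg hΦd, smul_zero, mul_zero]
  rw [partA, partB]
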